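/- Let λ ∈ (0,1] and m ≥ 1. The m-fold convolution of the Borel distribution with parameter λ is the Borel–Tanner distribution: for all n ≥ m, ∑ over m-tuples (n_1,...,n_m) of positive integers with n_1+⋯+n_m = n of ∏_{ℓ=1}^m (λ n_ℓ)^{n_ℓ-1}/n_ℓ! · e^{-λ n_ℓ} equals m·(λn)^{n-m}/(n·(n-m)!) · e^{-λn}. -/

import Mathlib

open Finset

noncomputable def B (x : ℝ) (k : ℕ) : ℝ := if k = 0 then 1 else x * (x + k) ^ (k - 1)

noncomputable def Tr (k : ℕ) : ℝ := if k = 0 then 0 else (k : ℝ) ^ (k - 1)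

lemma B_zero (x : ℝ) : B x 0 = 1 := rfl

lemma B_shift (x : ℝ) (j : ℕ) : B x (j + 1) = x * ((x + 1) + (j : ℕ)) ^ j := by
  simp only [B, Nat.succ_ne_zero, if_false, Nat.add_sub_cancel]
  push_cast
  ring_nf

lemma Tr_shift (j : ℕ) : Tr (j + 1) = ((1 : ℝ) + (j : ℕ)) ^ j := by
  simp only [Tr, Nat.succ_ne_zero, if_false, Nat.add_sub_cancel]
  push_cast
  ring_nf

lemma choose_aux (p k : ℕ) :
    (p + 1 - k) * (p + 1).choose k = (p + 1) * p.choose k := by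
  rw [Nat.add_one_mul_choose_eq p k, Nat.choose_succ_right_eq (p + 1) k, mul_comm]

lemma F_id : ∀ (p : ℕ) (x y : ℝ),
    ∑ k ∈ range (p + 1), (p.choose k : ℝ) * B x k * (y + (p - k : ℕ)) ^ (p - k)
      = (x + y + p) ^ p := by
  intro p
  induction p with
  | zero => intro x y; simp [B]
  | succ p ih =>
    intro x y
    -- the symmetric Abel sum
    have hS : ∑ k ∈ range (p + 2), ((p + 1).choose k : ℝ) * B x k * B y (p + 1 - k)
        = (x + y) * (x + y + 1 + p) ^ p := by
      rw [Finset.sum_range_succ']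
      have h0 : ((p + 1).choose 0 : ℝ) * B x 0 * B y (p + 1 - 0) = y * ((y + 1) + (p : ℕ)) ^ p := by
        simp [B_zero, B_shift]
      rw [h0]
      have split : ∀ i ∈ range (p + 1),
          ((p + 1).choose (i + 1) : ℝ) * B x (i + 1) * B y (p + 1 - (i + 1))
          = (p.choose i : ℝ) * B x (i + 1) * B y (p - i)
            + (p.choose (i + 1) : ℝ) * B x (i + 1) * B y (p - i) := by
        intro i hi
        have hpi : p + 1 - (i + 1) = p - i := by omega
        rw [hpi, Nat.choose_succ_succ]
        push_cast
        ring
      rw [sum_congr rfl split, Finset.sum_add_distrib]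
      -- second piece: reflect
      have e2 : ∑ i ∈ range (p + 1), (p.choose i : ℝ) * B x (i + 1) * B y (p - i)
          = x * (y + (x + 1) + p) ^ p := by
        rw [← Finset.sum_range_reflect, ← ih y (x + 1), Finset.mul_sum]
        refine sum_congr rfl fun j hj => ?_
        have hj' : j ≤ p := by
          have := mem_range.mp hj; omega
        have h1 : p + 1 - 1 - j = p - j := by omega
        have h2 : p - (p - j) = j := by omega
        have h3 : p.choose (p - j) = p.choose j := Nat.choose_symm hj'
        rw [h1, h3, h2, B_shift x (p - j)]
        ring
      -- first piece: shift, use ih x (y+1)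
      have e1 : ∑ i ∈ range (p + 1), (p.choose (i + 1) : ℝ) * B x (i + 1) * B y (p - i)
          = y * ((x + (y + 1) + p) ^ p - ((y + 1) + (p : ℕ)) ^ p) := by
        rw [Finset.sum_range_succ]
        have hlast : (p.choose (p + 1) : ℝ) * B x (p + 1) * B y (p - p) = 0 := by
          simp [Nat.choose_succ_self]
        rw [hlast, add_zero]
        have hF := ih x (y + 1)
        rw [Finset.sum_range_succ'] at hF
        have h0' : (p.choose 0 : ℝ) * B x 0 * ((y + 1) + ((p - 0 : ℕ) : ℝ)) ^ (p - 0)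
            = ((y + 1) + (p : ℕ)) ^ p := by simp [B_zero]
        rw [h0'] at hF
        have hmid : ∑ i ∈ range p, (p.choose (i + 1) : ℝ) * B x (i + 1) * B y (p - i)
            = y * ∑ i ∈ range p, (p.choose (i + 1) : ℝ) * B x (i + 1)
                * ((y + 1) + ((p - (i + 1) : ℕ) : ℝ)) ^ (p - (i + 1)) := by
          rw [Finset.mul_sum]
          refine sum_congr rfl fun i hi => ?_
          have hip : i < p := mem_range.mp hi
          have hpi : p - i = (p - (i + 1)) + 1 := by omega
          rw [hpi, B_shift y (p - (i + 1))]
          ring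
        rw [hmid]
        have hsum : ∑ i ∈ range p, (p.choose (i + 1) : ℝ) * B x (i + 1)
            * ((y + 1) + ((p - (i + 1) : ℕ) : ℝ)) ^ (p - (i + 1))
            = (x + (y + 1) + (p : ℝ)) ^ p - ((y + 1) + (p : ℕ)) ^ p := by
          linarith [hF]
        rw [hsum]
      rw [e1, e2]
      push_cast
      ring
    -- now the main step
    rw [Finset.sum_range_succ]
    have hlast : ((p + 1).choose (p + 1) : ℝ) * B x (p + 1)
          * (y + ((p + 1 - (p + 1) : ℕ) : ℝ)) ^ (p + 1 - (p + 1))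
        = x * ((x + 1) + (p : ℕ)) ^ p := by
      simp [B_shift]
    rw [hlast]
    have split2 : ∀ k ∈ range (p + 1),
        ((p + 1).choose k : ℝ) * B x k * (y + ((p + 1 - k : ℕ) : ℝ)) ^ (p + 1 - k)
        = ((p + 1).choose k : ℝ) * B x k * B y (p + 1 - k)
          + ((p : ℝ) + 1) * ((p.choose k : ℝ) * B x k * ((y + 1) + ((p - k : ℕ) : ℝ)) ^ (p - k)) := by
      intro k hk
      have hkp : k ≤ p := by have := mem_range.mp hk; omega
      have h1 : p + 1 - k = (p - k) + 1 := by omega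
      have hc : (((p - k : ℕ) : ℝ) + 1) * ((p + 1).choose k : ℝ)
          = ((p : ℝ) + 1) * (p.choose k : ℝ) := by
        have h2 := choose_aux p k
        rw [h1] at h2
        exact_mod_cast congrArg (fun t : ℕ => (t : ℝ)) h2
      have hbase : (y + (((p - k) + 1 : ℕ) : ℝ)) = (y + 1) + ((p - k : ℕ) : ℝ) := by
        push_cast; ring
      rw [h1, hbase, pow_succ, B_shift y (p - k)]
      linear_combination (B x k * ((y + 1) + ((p - k : ℕ) : ℝ)) ^ (p - k)) * hc
    rw [sum_congr rfl split2, Finset.sum_add_distrib]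
    have part1 : ∑ k ∈ range (p + 1), ((p + 1).choose k : ℝ) * B x k * B y (p + 1 - k)
        = (x + y) * (x + y + 1 + (p : ℝ)) ^ p - x * ((x + 1) + (p : ℕ)) ^ p := by
      rw [Finset.sum_range_succ] at hS
      have hl : ((p + 1).choose (p + 1) : ℝ) * B x (p + 1) * B y (p + 1 - (p + 1))
          = x * ((x + 1) + (p : ℕ)) ^ p := by
        simp [B_shift, B_zero]
      rw [hl] at hS
      linarith [hS]
    have part2 : ∑ k ∈ range (p + 1),
        ((p : ℝ) + 1) * ((p.choose k : ℝ) * B x k * ((y + 1) + ((p - k : ℕ) : ℝ)) ^ (p - k))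
        = ((p : ℝ) + 1) * (x + (y + 1) + (p : ℝ)) ^ p := by
      rw [← Finset.mul_sum, ih x (y + 1)]
    rw [part1, part2]
    push_cast
    ring

lemma pow_pred_mul (p : ℕ) (z : ℝ) : (p : ℝ) * z ^ (p - 1) * z = (p : ℝ) * z ^ p := by
  cases p with
  | zero => simp
  | succ q => simp only [Nat.add_sub_cancel, pow_succ]; ring

lemma D_aux (p : ℕ)
    (hG : ∀ y : ℝ, ∑ k ∈ range (p + 1), (p.choose k : ℝ) * Tr k * (y + ((p - k : ℕ) : ℝ)) ^ (p - k)
      = (p : ℝ) * (y + p) ^ (p - 1)) (y : ℝ) :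
    ∑ k ∈ range (p + 2), ((p + 1).choose k : ℝ) * Tr k * B y (p + 1 - k)
      = (y + (p : ℝ) + 1) ^ p + (p : ℝ) * y * (y + (p : ℝ) + 1) ^ (p - 1) := by
  rw [Finset.sum_range_succ']
  have h0 : ((p + 1).choose 0 : ℝ) * Tr 0 * B y (p + 1 - 0) = 0 := by simp [Tr]
  rw [h0, add_zero]
  have split : ∀ i ∈ range (p + 1),
      ((p + 1).choose (i + 1) : ℝ) * Tr (i + 1) * B y (p + 1 - (i + 1))
      = (p.choose i : ℝ) * Tr (i + 1) * B y (p - i)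
        + (p.choose (i + 1) : ℝ) * Tr (i + 1) * B y (p - i) := by
    intro i hi
    have hpi : p + 1 - (i + 1) = p - i := by omega
    rw [hpi, Nat.choose_succ_succ]; push_cast; ring
  rw [sum_congr rfl split, Finset.sum_add_distrib]
  have e1 : ∑ i ∈ range (p + 1), (p.choose i : ℝ) * Tr (i + 1) * B y (p - i)
      = (y + 1 + (p : ℝ)) ^ p := by
    rw [← Finset.sum_range_reflect, ← F_id p y 1]
    refine sum_congr rfl fun j hj => ?_
    have hj' : j ≤ p := by have := mem_range.mp hj; omega
    have h1 : p + 1 - 1 - j = p - j := by omega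
    have h2 : p - (p - j) = j := by omega
    have h3 : p.choose (p - j) = p.choose j := Nat.choose_symm hj'
    rw [h1, h3, h2, Tr_shift (p - j)]
    ring
  have e2 : ∑ i ∈ range (p + 1), (p.choose (i + 1) : ℝ) * Tr (i + 1) * B y (p - i)
      = (p : ℝ) * y * (y + (p : ℝ) + 1) ^ (p - 1) := by
    rw [Finset.sum_range_succ]
    have hlast : (p.choose (p + 1) : ℝ) * Tr (p + 1) * B y (p - p) = 0 := by
      simp [Nat.choose_succ_self]
    rw [hlast, add_zero]
    have hGy := hG (y + 1)
    rw [Finset.sum_range_succ'] at hGy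
    have h0' : (p.choose 0 : ℝ) * Tr 0 * ((y + 1) + ((p - 0 : ℕ) : ℝ)) ^ (p - 0) = 0 := by
      simp [Tr]
    rw [h0', add_zero] at hGy
    have hmid : ∑ i ∈ range p, (p.choose (i + 1) : ℝ) * Tr (i + 1) * B y (p - i)
        = y * ∑ i ∈ range p, (p.choose (i + 1) : ℝ) * Tr (i + 1)
            * ((y + 1) + ((p - (i + 1) : ℕ) : ℝ)) ^ (p - (i + 1)) := by
      rw [Finset.mul_sum]
      refine sum_congr rfl fun i hi => ?_
      have hip : i < p := mem_range.mp hi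
      have hpi : p - i = (p - (i + 1)) + 1 := by omega
      rw [hpi, B_shift y (p - (i + 1))]
      ring
    rw [hmid, hGy]
    ring
  rw [e1, e2]
  ring

lemma G_id : ∀ (p : ℕ) (y : ℝ),
    ∑ k ∈ range (p + 1), (p.choose k : ℝ) * Tr k * (y + ((p - k : ℕ) : ℝ)) ^ (p - k)
      = (p : ℝ) * (y + p) ^ (p - 1) := by
  intro p
  induction p with
  | zero => intro y; simp [Tr]
  | succ p ih =>
    intro y
    have hD := D_aux p ih
    rw [Finset.sum_range_succ]
    have hlast : ((p + 1).choose (p + 1) : ℝ) * Tr (p + 1)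
          * (y + ((p + 1 - (p + 1) : ℕ) : ℝ)) ^ (p + 1 - (p + 1))
        = ((1 : ℝ) + (p : ℕ)) ^ p := by
      simp [Tr_shift]
    rw [hlast]
    have split3 : ∀ k ∈ range (p + 1),
        ((p + 1).choose k : ℝ) * Tr k * (y + ((p + 1 - k : ℕ) : ℝ)) ^ (p + 1 - k)
        = ((p + 1).choose k : ℝ) * Tr k * B y (p + 1 - k)
          + ((p : ℝ) + 1) * ((p.choose k : ℝ) * Tr k * ((y + 1) + ((p - k : ℕ) : ℝ)) ^ (p - k)) := by
      intro k hk
      have hkp : k ≤ p := by have := mem_range.mp hk; omega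
      have h1 : p + 1 - k = (p - k) + 1 := by omega
      have hc : (((p - k : ℕ) : ℝ) + 1) * ((p + 1).choose k : ℝ)
          = ((p : ℝ) + 1) * (p.choose k : ℝ) := by
        have h2 := choose_aux p k
        rw [h1] at h2
        exact_mod_cast congrArg (fun t : ℕ => (t : ℝ)) h2
      have hbase : (y + (((p - k) + 1 : ℕ) : ℝ)) = (y + 1) + ((p - k : ℕ) : ℝ) := by
        push_cast; ring
      rw [h1, hbase, pow_succ, B_shift y (p - k)]
      linear_combination (Tr k * ((y + 1) + ((p - k : ℕ) : ℝ)) ^ (p - k)) * hc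
    rw [sum_congr rfl split3, Finset.sum_add_distrib]
    have part1 : ∑ k ∈ range (p + 1), ((p + 1).choose k : ℝ) * Tr k * B y (p + 1 - k)
        = (y + (p : ℝ) + 1) ^ p + (p : ℝ) * y * (y + (p : ℝ) + 1) ^ (p - 1)
          - ((1 : ℝ) + (p : ℕ)) ^ p := by
      have := hD y
      rw [Finset.sum_range_succ] at this
      have hl : ((p + 1).choose (p + 1) : ℝ) * Tr (p + 1) * B y (p + 1 - (p + 1))
          = ((1 : ℝ) + (p : ℕ)) ^ p := by
        simp [Tr_shift, B_zero]
      rw [hl] at this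
      linarith [this]
    have part2 : ∑ k ∈ range (p + 1),
        ((p : ℝ) + 1) * ((p.choose k : ℝ) * Tr k * ((y + 1) + ((p - k : ℕ) : ℝ)) ^ (p - k))
        = ((p : ℝ) + 1) * ((p : ℝ) * ((y + 1) + (p : ℝ)) ^ (p - 1)) := by
      rw [← Finset.mul_sum, ih (y + 1)]
    rw [part1, part2]
    simp only [Nat.add_sub_cancel]
    push_cast
    linear_combination pow_pred_mul p (y + (p : ℝ) + 1)

lemma D_id (p : ℕ) (y : ℝ) :
    ∑ k ∈ range (p + 2), ((p + 1).choose k : ℝ) * Tr k * B y (p + 1 - k)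
      = (y + (p : ℝ) + 1) ^ p + (p : ℝ) * y * (y + (p : ℝ) + 1) ^ (p - 1) :=
  D_aux p (G_id p) y

noncomputable def bor (k : ℕ) : ℝ := (k : ℝ) ^ (k - 1) / (k.factorial : ℝ)

/-- decomposition of a sum over (m+1)-tuples -/
lemma sum_tuple_succ (m n : ℕ) (g : (Fin (m + 1) → ℕ) → ℝ) :
    ∑ f ∈ Finset.Nat.antidiagonalTuple (m + 1) n, g f
      = ∑ ij ∈ Finset.HasAntidiagonal.antidiagonal n,
          ∑ f ∈ Finset.Nat.antidiagonalTuple m ij.2, g (Fin.cons ij.1 f) := by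
  rw [← Finset.sum_sigma (Finset.HasAntidiagonal.antidiagonal n)
      (fun ij => Finset.Nat.antidiagonalTuple m ij.2)
      (fun x => g (Fin.cons x.1.1 x.2))]
  refine Finset.sum_bij' (fun f _ => ⟨(f 0, ∑ i : Fin m, Fin.tail f i), Fin.tail f⟩)
    (fun x _ => Fin.cons x.1.1 x.2) ?_ ?_ ?_ ?_ ?_
  · intro f hf
    rw [Finset.Nat.mem_antidiagonalTuple] at hf
    rw [Finset.mem_sigma]
    constructor
    · rw [Finset.HasAntidiagonal.mem_antidiagonal]
      show f 0 + ∑ i : Fin m, Fin.tail f i = n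
      rw [← hf, Fin.sum_univ_succ]
      rfl
    · rw [Finset.Nat.mem_antidiagonalTuple]
  · intro x hx
    rw [Finset.mem_sigma] at hx
    obtain ⟨h1, h2⟩ := hx
    rw [Finset.HasAntidiagonal.mem_antidiagonal] at h1
    rw [Finset.Nat.mem_antidiagonalTuple] at h2 ⊢
    rw [Fin.sum_univ_succ]
    simp only [Fin.cons_zero, Fin.cons_succ]
    rw [h2]
    exact h1
  · intro f _
    exact Fin.cons_self_tail f
  · intro x hx
    rw [Finset.mem_sigma] at hx
    obtain ⟨_, h2⟩ := hx
    rw [Finset.Nat.mem_antidiagonalTuple] at h2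
    ext1
    · simp only [Fin.cons_zero, Fin.tail_cons]
      rw [Prod.ext_iff]
      refine ⟨rfl, ?_⟩
      simpa using h2
    · simp [Fin.tail_cons]
  · intro f _
    rw [Fin.cons_self_tail f]

lemma vanish (m b : ℕ) (h : b < m) :
    ∑ f ∈ Finset.Nat.antidiagonalTuple m b,
      (if (∀ i, 1 ≤ f i) then ∏ ℓ, bor (f ℓ) else 0) = 0 := by
  refine Finset.sum_eq_zero fun f hf => ?_
  rw [Finset.Nat.mem_antidiagonalTuple] at hf
  rw [if_neg]
  intro hall
  have : (m : ℕ) ≤ ∑ i, f i := by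
    calc m = ∑ _i : Fin m, 1 := by simp
    _ ≤ ∑ i, f i := Finset.sum_le_sum fun i _ => hall i
  omega

lemma bare : ∀ m, 1 ≤ m → ∀ n, m ≤ n →
    ∑ f ∈ (Finset.Nat.antidiagonalTuple m n).filter (fun f => ∀ i, 1 ≤ f i),
      ∏ ℓ, bor (f ℓ)
    = m * (n : ℝ) ^ (n - m) / (n * (n - m).factorial) := by
  intro m
  induction m with
  | zero => omega
  | succ m ih =>
    intro _ n hn
    rcases Nat.eq_zero_or_pos m with hm0 | hm1
    · -- base case m+1 = 1
      subst hm0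
      rw [Finset.Nat.antidiagonalTuple_one, Finset.sum_filter, Finset.sum_singleton]
      rw [if_pos]
      · have hprod : ∏ ℓ : Fin 1, bor (![n] ℓ) = bor n := by
          rw [Fin.prod_univ_one]
          rfl
        rw [hprod, bor]
        have hfac : ((n.factorial : ℕ) : ℝ) = (n : ℝ) * ((n - 1).factorial : ℝ) := by
          rw [← Nat.mul_factorial_pred (by omega : n ≠ 0)]
          push_cast
          ring
        rw [hfac]
        push_cast
        ring
      · intro i
        have : (![n] i) = n := by
          fin_cases i <;> rfl
        omega
    · -- inductive step
      have hmn : m + 1 ≤ n := hn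
      set p := n - m - 1 + 1 with hp  -- p = n - m ≥ 1
      have hpn : p = n - m := by omega
      have hq : p - 1 = n - m - 1 := by omega
      -- rewrite as ite-sum and decompose
      rw [Finset.sum_filter, sum_tuple_succ m n (fun f => if (∀ i, 1 ≤ f i) then ∏ ℓ, bor (f ℓ) else 0)]
      rw [Finset.Nat.sum_antidiagonal_eq_sum_range_succ_mk]
      -- inner sums
      have hinner : ∀ k, k ≤ n →
          (∑ f ∈ Finset.Nat.antidiagonalTuple m (n - k),
            (if (∀ i, 1 ≤ (Fin.cons k f : Fin (m+1) → ℕ) i) then ∏ ℓ, bor ((Fin.cons k f : Fin (m+1) → ℕ) ℓ) else 0))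
          = (if 1 ≤ k then bor k else 0) *
            (∑ f ∈ Finset.Nat.antidiagonalTuple m (n - k),
              (if (∀ i, 1 ≤ f i) then ∏ ℓ, bor (f ℓ) else 0)) := by
        intro k _
        rw [Finset.mul_sum]
        refine Finset.sum_congr rfl fun f _ => ?_
        have hcond : (∀ i, 1 ≤ (Fin.cons k f : Fin (m+1) → ℕ) i) ↔ (1 ≤ k ∧ ∀ i, 1 ≤ f i) := by
          constructor
          · intro h
            refine ⟨h 0, fun i => ?_⟩
            have := h i.succ
            rwa [Fin.cons_succ] at this
          · intro h i
            refine Fin.cases ?_ ?_ i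
            · exact h.1
            · intro j; rw [Fin.cons_succ]; exact h.2 j
        have hprod : ∏ ℓ, bor ((Fin.cons k f : Fin (m+1) → ℕ) ℓ) = bor k * ∏ ℓ, bor (f ℓ) := by
          rw [Fin.prod_univ_succ]
          simp [Fin.cons_zero, Fin.cons_succ]
        by_cases h1 : 1 ≤ k
        · by_cases h2 : ∀ i, 1 ≤ f i
          · rw [if_pos (hcond.mpr ⟨h1, h2⟩), if_pos h1, if_pos h2, hprod]
          · rw [if_neg (fun hc => h2 (hcond.mp hc).2), if_pos h1, if_neg h2, mul_zero]
        · rw [if_neg (fun hc => h1 (hcond.mp hc).1), if_neg h1, zero_mul]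
      rw [Finset.sum_congr rfl (fun k hk => hinner k (by
        have := Finset.mem_range.mp hk; omega))]
      -- restrict the range to p+1
      have hsub : Finset.range (p + 1) ⊆ Finset.range (n + 1) := by
        apply Finset.range_subset_range.mpr; omega
      rw [← Finset.sum_subset hsub (fun k hk hk' => ?_)]
      swap
      · have hk1 : p + 1 ≤ k := by
          by_contra hcon
          exact hk' (Finset.mem_range.mpr (by omega))
        have : n - k < m := by
          have := Finset.mem_range.mp hk
          omega
        rw [vanish m (n - k) this, mul_zero]
      -- termwise identification with the Abel sum
      have hterm : ∀ k ∈ Finset.range (p + 1),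
          (if 1 ≤ k then bor k else 0) *
            (∑ f ∈ Finset.Nat.antidiagonalTuple m (n - k),
              (if (∀ i, 1 ≤ f i) then ∏ ℓ, bor (f ℓ) else 0))
          = ((p.choose k : ℝ) * Tr k * B (m : ℝ) (p - k)) / (p.factorial : ℝ) := by
        intro k hk
        have hkp : k ≤ p := by have := Finset.mem_range.mp hk; omega
        rcases Nat.eq_zero_or_pos k with hk0 | hk1
        · subst hk0
          simp [Tr]
        · rw [if_pos (show 1 ≤ k by omega)]
          have hmnk : m ≤ n - k := by omega
          have hbare := ih hm1 (n - k) hmnk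
          rw [← Finset.sum_filter, hbare, bor]
          have hnk : (0:ℝ) < ((n - k : ℕ) : ℝ) := by
            have : 0 < n - k := by omega
            exact_mod_cast this
          have hchoose : ((p.choose k : ℕ) : ℝ)
              = (p.factorial : ℝ) / ((k.factorial : ℝ) * ((p - k).factorial : ℝ)) :=
            Nat.cast_choose ℝ hkp
          have hTr : Tr k = (k : ℝ) ^ (k - 1) := if_neg (by omega)
          have hkfac : ((k.factorial : ℕ) : ℝ) ≠ 0 := by positivity
          have hpfac : ((p.factorial : ℕ) : ℝ) ≠ 0 := by positivity
          have hpkfac : (((p - k).factorial : ℕ) : ℝ) ≠ 0 := by positivity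
          rcases Nat.eq_or_lt_of_le hkp with hkeq | hklt
          · -- k = p
            have h1 : n - k = m := by omega
            have h2 : m - m = 0 := Nat.sub_self m
            have h3 : p - k = 0 := by omega
            have h4 : p.choose k = 1 := by rw [hkeq]; exact Nat.choose_self p
            have h5 : p.factorial = k.factorial := by rw [hkeq]
            rw [h1, h2, h3, h4, h5]
            simp only [Nat.factorial_zero, pow_zero, B, if_pos rfl]
            rw [hTr]
            have hm0 : ((m:ℕ):ℝ) ≠ 0 := by
              have : 0 < m := hm1; positivity
            field_simp
            simp
          · -- k < p
            have hnkm : n - k - m = p - k := by omega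
            have hpk1 : 1 ≤ p - k := by omega
            have hB : B (m : ℝ) (p - k) = (m : ℝ) * ((m : ℝ) + ((p - k : ℕ) : ℝ)) ^ (p - k - 1) := by
              rw [B, if_neg (by omega)]
            have hcast : ((n - k : ℕ) : ℝ) = (m : ℝ) + ((p - k : ℕ) : ℝ) := by
              have : n - k = m + (p - k) := by omega
              rw [this]; push_cast; ring
            have hpow : ((n - k : ℕ) : ℝ) ^ (p - k)
                = ((n - k : ℕ) : ℝ) ^ (p - k - 1) * ((n - k : ℕ) : ℝ) := by
              conv_lhs => rw [show p - k = (p - k - 1) + 1 by omega]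
              rw [pow_succ]
            have hnk0 : ((n - k : ℕ) : ℝ) ≠ 0 := ne_of_gt hnk
            rw [hB, hchoose, hTr, hnkm, hpow, ← hcast]
            field_simp
      rw [Finset.sum_congr rfl hterm]
      rw [← Finset.sum_div]
      -- apply the Abel identity D_id with p = q+1
      obtain ⟨q, hq2⟩ : ∃ q, p = q + 1 := ⟨p - 1, by omega⟩
      rw [hq2, show q + 1 + 1 = q + 2 from rfl, D_id q (m : ℝ)]
      have hnq : n - (m + 1) = q := by omega
      have hn2 : (n : ℝ) = (m : ℝ) + (q : ℝ) + 1 := by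
        have : n = m + q + 1 := by omega
        rw [this]; push_cast; ring
      have hfacq : (((q + 1).factorial : ℕ) : ℝ) = ((q : ℝ) + 1) * (q.factorial : ℝ) := by
        rw [Nat.factorial_succ]; push_cast; ring
      rw [hnq, hfacq, hn2]
      have hq0 : ((q.factorial : ℕ) : ℝ) ≠ 0 := by positivity
      have hz : (m : ℝ) + (q : ℝ) + 1 ≠ 0 := by positivity
      have hq1 : ((q : ℝ) + 1) ≠ 0 := by positivity
      have hpm := pow_pred_mul q ((m : ℝ) + (q : ℝ) + 1)
      field_simp
      push_cast
      linear_combination (m : ℝ) * hpm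

theorem stmt4 (lam : ℝ) (h0 : 0 < lam) (h1 : lam ≤ 1) (m n : ℕ) (hm : 1 ≤ m) (hn : m ≤ n) :
    ∑ f ∈ (Finset.Nat.antidiagonalTuple m n).filter (fun f => ∀ i, 1 ≤ f i),
      ∏ ℓ, (lam * f ℓ) ^ (f ℓ - 1) / (f ℓ).factorial * Real.exp (-(lam * f ℓ))
    = m * (lam * n) ^ (n - m) / (n * (n - m).factorial) * Real.exp (-(lam * n)) := by
  have key := bare m hm n hn
  have hconv : ∀ f ∈ (Finset.Nat.antidiagonalTuple m n).filter (fun f => ∀ i, 1 ≤ f i),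
      (∏ ℓ, (lam * f ℓ) ^ (f ℓ - 1) / (f ℓ).factorial * Real.exp (-(lam * f ℓ)))
      = lam ^ (n - m) * Real.exp (-(lam * n)) * ∏ ℓ, bor (f ℓ) := by
    intro f hf
    rw [Finset.mem_filter, Finset.Nat.mem_antidiagonalTuple] at hf
    obtain ⟨hsum, hpos⟩ := hf
    have hsub : (∑ ℓ, (f ℓ - 1)) = n - m := by
      have h1 : ∑ ℓ : Fin m, (f ℓ - 1 + 1) = ∑ ℓ, f ℓ :=
        Finset.sum_congr rfl fun i _ => by have := hpos i; omega
      rw [Finset.sum_add_distrib] at h1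
      simp only [Finset.sum_const, Finset.card_univ, Fintype.card_fin, smul_eq_mul, mul_one] at h1
      omega
    have hterm : ∀ ℓ : Fin m,
        (lam * f ℓ) ^ (f ℓ - 1) / (f ℓ).factorial * Real.exp (-(lam * f ℓ))
        = (lam ^ (f ℓ - 1) * Real.exp (-(lam * f ℓ))) * bor (f ℓ) := by
      intro ℓ
      rw [bor, mul_pow]
      ring
    rw [Finset.prod_congr rfl (fun ℓ _ => hterm ℓ), Finset.prod_mul_distrib,
      Finset.prod_mul_distrib, Finset.prod_pow_eq_pow_sum, hsub]
    have hexp : (∏ ℓ, Real.exp (-(lam * f ℓ))) = Real.exp (-(lam * n)) := by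
      rw [← Real.exp_sum]
      congr 1
      have hc : (∑ ℓ : Fin m, ((f ℓ : ℕ) : ℝ)) = (n : ℝ) := by
        exact_mod_cast congrArg (fun t : ℕ => (t : ℝ)) hsum
      simp only [neg_mul_eq_mul_neg]
      rw [← Finset.mul_sum, Finset.sum_neg_distrib, hc]
    rw [hexp]
  rw [Finset.sum_congr rfl hconv, ← Finset.mul_sum, key, mul_pow]
  ring
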